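/- Consider the Fröbose bootstrap percolation dynamics on the odd sublattice 𝔹ᵈ_o of the body-centered hypercubic lattice 𝔹ᵈ, started with the closed odd vertices occupied, and suppose the box B̃(u,n) is good, meaning: (i) all even vertices of B̃(u,n) are open, and (ii) its odd part B̃_o(u,n) is internally spanned. Then for every odd vertex v in B̃(u,n) that becomes occupied at some finite time t, Eve (the player who moves to even vertices) has a winning strategy in Trap started from v that keeps the token in B̃(u,n) and uses at most t moves of Eve. The strategy is: when the token is at an odd vertex w with occupation time T(w) = t ≥ 1, Eve moves to an even neighbor x of w such that all neighbors of x other than w are occupied at time t−1. -/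

import Mathlib

/-- Vertices of the ambient lattice `ℤᵈ`. -/
abbrev BV (d : ℕ) := Fin d → ℤ

/-- An odd vertex of the body-centered lattice: all coordinates odd. -/
def isOddV {d : ℕ} (v : BV d) : Prop := ∀ k, Odd (v k)

/-- An even vertex of the body-centered lattice: all coordinates even. -/
def isEvenV {d : ℕ} (v : BV d) : Prop := ∀ k, Even (v k)

/-- The body-centered hypercubic lattice `𝔹ᵈ`: vertices with all coordinates
even or all odd, adjacent when at `ℓ∞`-distance `1` (equivalently, for a pair
of opposite parities, when all coordinates differ by exactly `1`). -/
def bccGraph (d : ℕ) : SimpleGraph (BV d) where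
  Adj u v := u ≠ v ∧
    ((isOddV u ∧ isEvenV v) ∨ (isEvenV u ∧ isOddV v)) ∧ ∀ k, |u k - v k| = 1
  symm := by
    constructor
    rintro u v ⟨hne, hp, hd⟩
    refine ⟨hne.symm, ?_, fun k => by rw [abs_sub_comm]; exact hd k⟩
    rcases hp with ⟨h1, h2⟩ | ⟨h1, h2⟩
    · exact Or.inr ⟨h2, h1⟩
    · exact Or.inl ⟨h2, h1⟩
  loopless := by
    constructor
    rintro u ⟨hne, -, -⟩
    exact hne rfl

variable {V : Type*}

/-- A move to `w` is legal from history `h` if `w` is adjacent to the current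
vertex (the head of `h`), has not been visited, and is allowed (open). -/
def TrapLegal (G : SimpleGraph V) (A : Set V) (h : List V) (w : V) : Prop :=
  ∃ c, h.head? = some c ∧ G.Adj c w ∧ w ∉ h ∧ w ∈ A

open Classical in
/-- The evolution of Trap when the first player uses strategy `σ` and the
second player uses strategy `τ`, starting from `v`; the first player moves at
histories of odd length.  If the strategy of the player to move chooses an
illegal move, the history freezes. -/
noncomputable def trapPlay (G : SimpleGraph V) (A : Set V) (σ τ : List V → V) (v : V) :
    ℕ → List V
  | 0 => [v]
  | n + 1 =>
    let h := trapPlay G A σ τ v n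
    let w := if h.length % 2 = 1 then σ h else τ h
    if TrapLegal G A h w then w :: h else h

/-- One step of the Fröbose bootstrap dynamics on the odd sublattice `𝔹ᵈ_o`:
an odd vertex `v` becomes occupied if some even neighbour `w` of `v` has all
its neighbours other than `v` already occupied (this is the hypercube rule
transported to `𝔹ᵈ_o ≅ ℤᵈ`). -/
def frobStep (d : ℕ) (A : Set (BV d)) : Set (BV d) :=
  A ∪ {v | isOddV v ∧ ∃ w, (bccGraph d).Adj w v ∧
    ∀ x, (bccGraph d).Adj w x → x ≠ v → x ∈ A}

/-- The odd part `B̃_o(u,n) = u + 2([1,n]ᵈ ∩ ℤᵈ)` of the box. -/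
def boxO (d : ℕ) (u : BV d) (n : ℕ) : Set (BV d) :=
  {v | ∀ k, ∃ m : ℤ, 1 ≤ m ∧ m ≤ (n : ℤ) ∧ v k = u k + 2 * m}

/-- The even part `B̃_e(u,n)`: even vertices all of whose neighbours lie in
`B̃_o(u,n)`. -/
def boxE (d : ℕ) (u : BV d) (n : ℕ) : Set (BV d) :=
  {w | isEvenV w ∧ ∀ x, (bccGraph d).Adj w x → x ∈ boxO d u n}

/-- The box `B̃(u,n) = B̃_o(u,n) ∪ B̃_e(u,n)`. -/
def boxB (d : ℕ) (u : BV d) (n : ℕ) : Set (BV d) :=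
  boxO d u n ∪ boxE d u n

namespace EveAux

open Classical

variable {d : ℕ}

lemma not_odd_even (hd : 0 < d) {x : BV d} (h1 : isOddV x) (h2 : isEvenV x) : False :=
  (Int.not_odd_iff_even.mpr (h2 ⟨0, hd⟩)) (h1 ⟨0, hd⟩)

lemma adj_even_odd (hd : 0 < d) {x y : BV d} (h : (bccGraph d).Adj x y) (hx : isEvenV x) :
    isOddV y := by
  rcases h.2.1 with ⟨h1, _⟩ | ⟨_, h2⟩
  · exact absurd hx (fun h2 => not_odd_even hd h1 h2)
  · exact h2

lemma adj_odd_even (hd : 0 < d) {x y : BV d} (h : (bccGraph d).Adj x y) (hx : isOddV x) :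
    isEvenV y := by
  rcases h.2.1 with ⟨_, h2⟩ | ⟨h1, _⟩
  · exact h2
  · exact absurd hx (fun h2 => not_odd_even hd h2 h1)

lemma boxO_odd {u : BV d} (hu : isOddV u) {n : ℕ} {v : BV d} (hv : v ∈ boxO d u n) :
    isOddV v := by
  intro k
  obtain ⟨m, _, _, hm⟩ := hv k
  rw [hm]
  exact (hu k).add_even (even_two_mul m)

/-- The initial occupied set. -/
def S (d : ℕ) (closed : Set (BV d)) (u : BV d) (n : ℕ) : Set (BV d) :=
  boxO d u n ∩ closed

/-- The unrestricted Fröbose dynamics. -/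
def Occ (d : ℕ) (closed : Set (BV d)) (u : BV d) (n : ℕ) (r : ℕ) : Set (BV d) :=
  (frobStep d)^[r] (S d closed u n)

lemma Occ_succ (closed : Set (BV d)) (u : BV d) (n : ℕ) (r : ℕ) :
    Occ d closed u n (r + 1) = frobStep d (Occ d closed u n r) :=
  Function.iterate_succ_apply' _ _ _

/-- The box-restricted dynamics. -/
def Occ' (d : ℕ) (closed : Set (BV d)) (u : BV d) (n : ℕ) : ℕ → Set (BV d)
  | 0 => S d closed u n
  | r + 1 => Occ' d closed u n r ∪ {v | ∃ x, x ∈ boxE d u n ∧ (bccGraph d).Adj x v ∧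
      ∀ y, (bccGraph d).Adj x y → y ≠ v → y ∈ Occ' d closed u n r}

lemma Occ'_mono {closed : Set (BV d)} {u : BV d} {n : ℕ} {a b : ℕ} (hab : a ≤ b) :
    Occ' d closed u n a ⊆ Occ' d closed u n b := by
  induction b with
  | zero => simp_all
  | succ b ih =>
    rcases Nat.lt_or_ge a (b+1) with h | h
    · exact (ih (by omega)).trans (Set.subset_union_left)
    · have : a = b + 1 := by omega
      subst this; rfl

lemma Occ'_subset_boxO {closed : Set (BV d)} {u : BV d} {n : ℕ} (r : ℕ) :
    Occ' d closed u n r ⊆ boxO d u n := by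
  induction r with
  | zero => exact Set.inter_subset_left
  | succ r ih =>
    rintro v (hv | ⟨x, hxE, hxv, -⟩)
    · exact ih hv
    · exact hxE.2 v hxv

/-- Occupation time for the box-restricted dynamics. -/
noncomputable def Tw (d : ℕ) (closed : Set (BV d)) (u : BV d) (n : ℕ) (w : BV d) : ℕ :=
  sInf {r | w ∈ Occ' d closed u n r}

lemma mem_Occ'_Tw {closed : Set (BV d)} {u : BV d} {n : ℕ} {w : BV d} {r : ℕ}
    (h : w ∈ Occ' d closed u n r) : w ∈ Occ' d closed u n (Tw d closed u n w) :=
  Nat.sInf_mem (s := {r | w ∈ Occ' d closed u n r}) ⟨r, h⟩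

lemma Tw_le {closed : Set (BV d)} {u : BV d} {n : ℕ} {w : BV d} {r : ℕ}
    (h : w ∈ Occ' d closed u n r) : Tw d closed u n w ≤ r :=
  Nat.sInf_le h

lemma Tw_pos {closed : Set (BV d)} {u : BV d} {n : ℕ} {w : BV d} {r : ℕ}
    (h : w ∈ Occ' d closed u n r) (hw : w ∉ closed) : 1 ≤ Tw d closed u n w := by
  rcases Nat.eq_zero_or_pos (Tw d closed u n w) with h0 | h1
  · have := mem_Occ'_Tw h
    rw [h0] at this
    exact absurd this.2 hw
  · exact h1

/-- The key witness property at the occupation time. -/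
lemma exists_witness {closed : Set (BV d)} {u : BV d} {n : ℕ} {w : BV d} {r : ℕ}
    (h : w ∈ Occ' d closed u n r) (hw : w ∉ closed) :
    ∃ x, x ∈ boxE d u n ∧ (bccGraph d).Adj x w ∧
      ∀ y, (bccGraph d).Adj x y → y ≠ w → y ∈ Occ' d closed u n (Tw d closed u n w - 1) := by
  have h1 := Tw_pos h hw
  have h2 := mem_Occ'_Tw h
  obtain ⟨k, hk⟩ : ∃ k, Tw d closed u n w = k + 1 := ⟨Tw d closed u n w - 1, by omega⟩
  rw [hk] at h2
  rcases h2 with h2 | ⟨x, hxE, hxw, hall⟩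
  · exact absurd (Tw_le h2) (by omega)
  · refine ⟨x, hxE, hxw, ?_⟩
    rw [hk]
    simpa using hall

end EveAux
namespace EveAux

variable {d : ℕ}

lemma mk_adj (hd : 0 < d) {x y : BV d} (hx : isEvenV x) (hy : isOddV y)
    (h : ∀ k, |x k - y k| = 1) : (bccGraph d).Adj x y := by
  refine ⟨?_, Or.inr ⟨hx, hy⟩, h⟩
  intro he
  subst he
  exact not_odd_even hd hy hx

lemma abs_one_cases {a b : ℤ} (h : |a - b| = 1) : a - b = 1 ∨ a - b = -1 :=
  abs_eq (by norm_num : (0:ℤ) ≤ 1) |>.mp h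

/-- For `d ≥ 2`, the unrestricted dynamics stays inside the box. -/
lemma Occ_subset_boxO (hd2 : 2 ≤ d) (closed : Set (BV d)) (u : BV d) (n : ℕ) :
    ∀ r, Occ d closed u n r ⊆ boxO d u n := by
  have hd : 0 < d := by omega
  intro r
  induction r with
  | zero => exact Set.inter_subset_left
  | succ r ih =>
    rw [Occ_succ]
    rintro v (hv | ⟨hodd, x, hxv, hall⟩)
    · exact ih hv
    · have hxe : isEvenV x := adj_odd_even hd hxv.symm hodd
      intro k
      set j : Fin d := if k.val = 0 then ⟨1, by omega⟩ else ⟨0, by omega⟩ with hj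
      have hjkv : j.val ≠ k.val := by
        rw [hj]; split <;> simp_all <;> omega
      have hjk : j ≠ k := fun he => hjkv (congrArg Fin.val he)
      set y : BV d := fun i => if i = j then 2 * x j - v j else v i with hy
      have hyj : y j = 2 * x j - v j := by rw [hy]; simp
      have hyi : ∀ i, i ≠ j → y i = v i := by intro i hi; rw [hy]; simp [hi]
      have hyodd : isOddV y := by
        intro i
        by_cases hij : i = j
        · subst hij; rw [hyj]; exact (Even.sub_odd ⟨x j, two_mul _⟩ (hodd j))
        · rw [hyi i hij]; exact hodd i
      have hadj : (bccGraph d).Adj x y := by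
        refine mk_adj hd hxe hyodd ?_
        intro i
        by_cases hij : i = j
        · subst hij
          rw [hyj]
          have h5 : x j - (2 * x j - v j) = -(x j - v j) := by ring
          rw [h5, abs_neg]
          exact hxv.2.2 j
        · rw [hyi i hij]; exact hxv.2.2 i
      have hne : y ≠ v := by
        intro he
        have h1 := congrFun he j
        rw [hyj] at h1
        rcases abs_one_cases (hxv.2.2 j) with h2 | h2 <;> omega
      have hybox := ih (hall y hadj hne)
      obtain ⟨m, hm1, hm2, hm3⟩ := hybox k
      exact ⟨m, hm1, hm2, by rw [← hyi k (Ne.symm hjk)]; exact hm3⟩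

/-- For `d ≥ 2`, the unrestricted dynamics is dominated by the restricted one. -/
lemma Occ_subset_Occ'_of_two_le (hd2 : 2 ≤ d) (closed : Set (BV d)) (u : BV d) (n : ℕ) :
    ∀ r, Occ d closed u n r ⊆ Occ' d closed u n r := by
  have hd : 0 < d := by omega
  intro r
  induction r with
  | zero => exact fun v hv => hv
  | succ r ih =>
    rw [Occ_succ]
    rintro v (hv | ⟨hodd, x, hxv, hall⟩)
    · exact Set.subset_union_left (ih hv)
    · have hxe : isEvenV x := adj_odd_even hd hxv.symm hodd
      have hvbox : v ∈ boxO d u n := by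
        apply Occ_subset_boxO hd2 closed u n (r+1)
        rw [Occ_succ]
        exact Or.inr ⟨hodd, x, hxv, hall⟩
      refine Or.inr ⟨x, ⟨hxe, ?_⟩, hxv, fun y hy hne => ih (hall y hy hne)⟩
      intro y hy
      by_cases hyv : y = v
      · subst hyv; exact hvbox
      · exact Occ_subset_boxO hd2 closed u n r (hall y hy hyv)

end EveAux
namespace EveAux

lemma ext1 {v w : BV 1} (h : v 0 = w 0) : v = w := by
  funext k
  have hk : k = 0 := Subsingleton.elim k 0
  rw [hk]; exact h

lemma isOddV1 {y : BV 1} (h : Odd (y 0)) : isOddV y := by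
  intro k
  have hk : k = 0 := Subsingleton.elim k 0
  rw [hk]; exact h

lemma isEvenV1 {y : BV 1} (h : Even (y 0)) : isEvenV y := by
  intro k
  have hk : k = 0 := Subsingleton.elim k 0
  rw [hk]; exact h

lemma mk_adj1 {x y : BV 1} (hx : Even (x 0)) (hy : Odd (y 0)) (h : |x 0 - y 0| = 1) :
    (bccGraph 1).Adj x y := by
  refine mk_adj one_pos (isEvenV1 hx) (isOddV1 hy) ?_
  intro k
  have hk : k = 0 := Subsingleton.elim k 0
  rw [hk]; exact h

lemma Fleft (closed : Set (BV 1)) (u : BV 1) (n : ℕ) :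
    ∀ r, ∀ y : BV 1, y ∈ Occ 1 closed u n r → y 0 < u 0 + 2 →
      ∃ r', r' < r ∧ (fun _ => y 0 + 2 : BV 1) ∈ Occ 1 closed u n r' := by
  intro r
  induction r using Nat.strong_induction_on with
  | _ r ih =>
  intro y hy hlt
  match r with
  | 0 =>
    obtain ⟨m, hm1, _, hm3⟩ := hy.1 0
    omega
  | r₀ + 1 =>
    rw [Occ_succ] at hy
    rcases hy with hy | ⟨hodd, x, hxy, hall⟩
    · obtain ⟨r', hr', h⟩ := ih r₀ (by omega) y hy hlt
      exact ⟨r', by omega, h⟩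
    · have hxe : isEvenV x := adj_odd_even one_pos hxy.symm hodd
      have habs : |x 0 - y 0| = 1 := hxy.2.2 0
      have hxy0 := abs_one_cases habs
      set z : BV 1 := fun _ => 2 * x 0 - y 0 with hzdef
      have hz0 : z 0 = 2 * x 0 - y 0 := rfl
      have hzadj : (bccGraph 1).Adj x z := by
        refine mk_adj1 (hxe 0) (Even.sub_odd ⟨x 0, two_mul _⟩ (hodd 0)) ?_
        rw [hz0]
        have h5 : x 0 - (2 * x 0 - y 0) = -(x 0 - y 0) := by ring
        rw [h5, abs_neg]; exact habs
      have hzne : z ≠ y := by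
        intro he
        have := congrFun he 0
        rw [hz0] at this; omega
      have hz : z ∈ Occ 1 closed u n r₀ := hall z hzadj hzne
      rcases hxy0 with h1 | h1
      · -- x 0 = y 0 + 1, z 0 = y 0 + 2
        have : (fun _ => y 0 + 2 : BV 1) = z := ext1 (by rw [hz0]; omega)
        exact ⟨r₀, by omega, this ▸ hz⟩
      · -- x 0 = y 0 - 1, z 0 = y 0 - 2
        obtain ⟨r₁, hr₁, hz2⟩ := ih r₀ (by omega) z hz (by rw [hz0]; omega)
        have hyz : (fun _ => z 0 + 2 : BV 1) = y := ext1 (by rw [hz0]; omega)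
        rw [hyz] at hz2
        obtain ⟨r₂, hr₂, h⟩ := ih r₁ (by omega) y hz2 hlt
        exact ⟨r₂, by omega, h⟩

lemma Fright (closed : Set (BV 1)) (u : BV 1) (n : ℕ) :
    ∀ r, ∀ y : BV 1, y ∈ Occ 1 closed u n r → u 0 + 2 * n < y 0 →
      ∃ r', r' < r ∧ (fun _ => y 0 - 2 : BV 1) ∈ Occ 1 closed u n r' := by
  intro r
  induction r using Nat.strong_induction_on with
  | _ r ih =>
  intro y hy hlt
  match r with
  | 0 =>
    obtain ⟨m, _, hm2, hm3⟩ := hy.1 0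
    omega
  | r₀ + 1 =>
    rw [Occ_succ] at hy
    rcases hy with hy | ⟨hodd, x, hxy, hall⟩
    · obtain ⟨r', hr', h⟩ := ih r₀ (by omega) y hy hlt
      exact ⟨r', by omega, h⟩
    · have hxe : isEvenV x := adj_odd_even one_pos hxy.symm hodd
      have habs : |x 0 - y 0| = 1 := hxy.2.2 0
      have hxy0 := abs_one_cases habs
      set z : BV 1 := fun _ => 2 * x 0 - y 0 with hzdef
      have hz0 : z 0 = 2 * x 0 - y 0 := rfl
      have hzadj : (bccGraph 1).Adj x z := by
        refine mk_adj1 (hxe 0) (Even.sub_odd ⟨x 0, two_mul _⟩ (hodd 0)) ?_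
        rw [hz0]
        have h5 : x 0 - (2 * x 0 - y 0) = -(x 0 - y 0) := by ring
        rw [h5, abs_neg]; exact habs
      have hzne : z ≠ y := by
        intro he
        have := congrFun he 0
        rw [hz0] at this; omega
      have hz : z ∈ Occ 1 closed u n r₀ := hall z hzadj hzne
      rcases hxy0 with h1 | h1
      · -- x 0 = y 0 + 1, z 0 = y 0 + 2 > box
        obtain ⟨r₁, hr₁, hz2⟩ := ih r₀ (by omega) z hz (by rw [hz0]; omega)
        have hyz : (fun _ => z 0 - 2 : BV 1) = y := ext1 (by rw [hz0]; omega)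
        rw [hyz] at hz2
        obtain ⟨r₂, hr₂, h⟩ := ih r₁ (by omega) y hz2 hlt
        exact ⟨r₂, by omega, h⟩
      · -- z 0 = y 0 - 2
        have : (fun _ => y 0 - 2 : BV 1) = z := ext1 (by rw [hz0]; omega)
        exact ⟨r₀, by omega, this ▸ hz⟩

lemma Occ_subset_Occ'_one (closed : Set (BV 1)) (u : BV 1) (n : ℕ) :
    ∀ r, ∀ v : BV 1, v ∈ Occ 1 closed u n r → v ∈ boxO 1 u n →
      v ∈ Occ' 1 closed u n r := by
  intro r
  induction r using Nat.strong_induction_on with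
  | _ r ih =>
  intro v hv hvbox
  match r with
  | 0 => exact hv
  | r₀ + 1 =>
    rw [Occ_succ] at hv
    rcases hv with hv | ⟨hodd, x, hxv, hall⟩
    · exact Set.subset_union_left (ih r₀ (by omega) v hv hvbox)
    · have hxe : isEvenV x := adj_odd_even one_pos hxv.symm hodd
      have habs : |x 0 - v 0| = 1 := hxv.2.2 0
      have hxv0 := abs_one_cases habs
      obtain ⟨m, hm1, hm2, hm3⟩ := hvbox 0
      set z : BV 1 := fun _ => 2 * x 0 - v 0 with hzdef
      have hz0 : z 0 = 2 * x 0 - v 0 := rfl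
      have hzadj : (bccGraph 1).Adj x z := by
        refine mk_adj1 (hxe 0) (Even.sub_odd ⟨x 0, two_mul _⟩ (hodd 0)) ?_
        rw [hz0]
        have h5 : x 0 - (2 * x 0 - v 0) = -(x 0 - v 0) := by ring
        rw [h5, abs_neg]; exact habs
      have hzne : z ≠ v := by
        intro he
        have := congrFun he 0
        rw [hz0] at this; omega
      have hz : z ∈ Occ 1 closed u n r₀ := hall z hzadj hzne
      -- the inner-witness construction, used when `z` is inside the box
      have inner : z ∈ boxO 1 u n → v ∈ Occ' 1 closed u n (r₀ + 1) := by
        intro hzbox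
        have hzO' : z ∈ Occ' 1 closed u n r₀ := ih r₀ (by omega) z hz hzbox
        have hxE : x ∈ boxE 1 u n := by
          refine ⟨hxe, ?_⟩
          intro y hy
          have hy0 := abs_one_cases (hy.2.2 0)
          rcases hxv0 with h1 | h1 <;> rcases hy0 with h2 | h2
          · exact (ext1 (show y 0 = v 0 by omega) : y = v) ▸ hvbox
          · exact (ext1 (show y 0 = z 0 by rw [hz0]; omega) : y = z) ▸ hzbox
          · exact (ext1 (show y 0 = z 0 by rw [hz0]; omega) : y = z) ▸ hzbox
          · exact (ext1 (show y 0 = v 0 by omega) : y = v) ▸ hvbox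
        refine Or.inr ⟨x, hxE, hxv, ?_⟩
        intro y hy hne
        have hy0 := abs_one_cases (hy.2.2 0)
        have hyz : y = z := by
          apply ext1
          rw [hz0]
          rcases hy0 with h2 | h2
          · rcases hxv0 with h1 | h1
            · exfalso; exact hne (ext1 (by omega))
            · omega
          · rcases hxv0 with h1 | h1
            · omega
            · exfalso; exact hne (ext1 (by omega))
        rw [hyz]; exact hzO'
      rcases hxv0 with h1 | h1
      · -- x 0 = v 0 + 1, z 0 = v 0 + 2
        by_cases hm : m + 1 ≤ (n : ℤ)
        · refine inner ?_
          intro k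
          have hk : k = 0 := Subsingleton.elim k 0
          exact ⟨m + 1, by omega, hm, by rw [hk, hz0]; omega⟩
        · -- z is outside on the right
          obtain ⟨r', hr', hz2⟩ := Fright closed u n r₀ z hz (by rw [hz0]; omega)
          have hzv : (fun _ => z 0 - 2 : BV 1) = v := ext1 (by rw [hz0]; omega)
          rw [hzv] at hz2
          exact Occ'_mono (by omega) (ih r' (by omega) v hz2 hvbox)
      · -- x 0 = v 0 - 1, z 0 = v 0 - 2
        by_cases hm : 2 ≤ m
        · refine inner ?_
          intro k
          have hk : k = 0 := Subsingleton.elim k 0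
          exact ⟨m - 1, by omega, by omega, by rw [hk, hz0]; omega⟩
        · obtain ⟨r', hr', hz2⟩ := Fleft closed u n r₀ z hz (by rw [hz0]; omega)
          have hzv : (fun _ => z 0 + 2 : BV 1) = v := ext1 (by rw [hz0]; omega)
          rw [hzv] at hz2
          exact Occ'_mono (by omega) (ih r' (by omega) v hz2 hvbox)

/-- For any `d ≥ 1`: occupied vertices inside the box are occupied by the
box-restricted dynamics, at the same time. -/
lemma Occ_subset_Occ' {d : ℕ} (hd : 0 < d) (closed : Set (BV d)) (u : BV d) (n : ℕ)
    (r : ℕ) (v : BV d) (hv : v ∈ Occ d closed u n r) (hvbox : v ∈ boxO d u n) :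
    v ∈ Occ' d closed u n r := by
  rcases Nat.lt_or_ge d 2 with h2 | h2
  · have hd1 : d = 1 := by omega
    subst hd1
    exact Occ_subset_Occ'_one closed u n r v hv hvbox
  · exact Occ_subset_Occ'_of_two_le h2 closed u n r hv

end EveAux
namespace EveAux

open Classical

variable {V : Type*}

lemma trapPlay_succ_odd {G : SimpleGraph V} {A : Set V} {σ τ : List V → V} {v : V} {m : ℕ}
    (hlen : (trapPlay G A σ τ v m).length % 2 = 1)
    (hleg : TrapLegal G A (trapPlay G A σ τ v m) (σ (trapPlay G A σ τ v m))) :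
    trapPlay G A σ τ v (m + 1) = σ (trapPlay G A σ τ v m) :: trapPlay G A σ τ v m := by
  simp only [trapPlay]
  rw [if_pos hlen, if_pos hleg]

lemma trapPlay_succ_even {G : SimpleGraph V} {A : Set V} {σ τ : List V → V} {v : V} {m : ℕ}
    (hlen : (trapPlay G A σ τ v m).length % 2 = 0)
    (hleg : TrapLegal G A (trapPlay G A σ τ v m) (τ (trapPlay G A σ τ v m))) :
    trapPlay G A σ τ v (m + 1) = τ (trapPlay G A σ τ v m) :: trapPlay G A σ τ v m := by
  simp only [trapPlay]
  rw [if_neg (by omega : ¬ (trapPlay G A σ τ v m).length % 2 = 1), if_pos hleg]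

lemma head?_headI {α : Type*} [Inhabited α] {l : List α} {a : α} (h : l.head? = some a) :
    l.headI = a ∧ a ∈ l := by
  cases l with
  | nil => simp at h
  | cons b l =>
    simp only [List.head?_cons, Option.some.injEq] at h
    subst h
    exact ⟨rfl, List.mem_cons_self⟩

variable {d : ℕ}

/-- The set of good moves for Eve at an odd vertex `w`. -/
def eveSet (d : ℕ) (closed : Set (BV d)) (u : BV d) (n : ℕ) (w : BV d) : Set (BV d) :=
  {x | x ∈ boxE d u n ∧ (bccGraph d).Adj x w ∧
    ∀ y, (bccGraph d).Adj x y → y ≠ w →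
      y ∈ Occ' d closed u n (Tw d closed u n w - 1)}

/-- Eve's strategy. -/
noncomputable def sigma (d : ℕ) (closed : Set (BV d)) (u : BV d) (n : ℕ)
    (h : List (BV d)) : BV d :=
  if hx : (eveSet d closed u n h.headI).Nonempty then hx.choose else fun _ => 0

lemma sigma_mem {closed : Set (BV d)} {u : BV d} {n : ℕ} {h : List (BV d)}
    (hx : (eveSet d closed u n h.headI).Nonempty) :
    sigma d closed u n h ∈ eveSet d closed u n h.headI := by
  rw [sigma, dif_pos hx]
  exact hx.choose_spec

/-- The play where Eve uses her canonical strategy. -/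
noncomputable def play (closed : Set (BV d)) (u : BV d) (n : ℕ)
    (τ : List (BV d) → BV d) (v : BV d) (m : ℕ) : List (BV d) :=
  trapPlay (bccGraph d) {x | x ∉ closed} (sigma d closed u n) τ v m

lemma play_succ_odd {closed : Set (BV d)} {u : BV d} {n : ℕ} {τ : List (BV d) → BV d}
    {v : BV d} {m : ℕ}
    (hlen : (play closed u n τ v m).length % 2 = 1)
    (hleg : TrapLegal (bccGraph d) {x | x ∉ closed} (play closed u n τ v m)
      (sigma d closed u n (play closed u n τ v m))) :
    play closed u n τ v (m + 1) =
      sigma d closed u n (play closed u n τ v m) :: play closed u n τ v m :=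
  trapPlay_succ_odd hlen hleg

lemma play_succ_even {closed : Set (BV d)} {u : BV d} {n : ℕ} {τ : List (BV d) → BV d}
    {v : BV d} {m : ℕ}
    (hlen : (play closed u n τ v m).length % 2 = 0)
    (hleg : TrapLegal (bccGraph d) {x | x ∉ closed} (play closed u n τ v m)
      (τ (play closed u n τ v m))) :
    play closed u n τ v (m + 1) = τ (play closed u n τ v m) :: play closed u n τ v m :=
  trapPlay_succ_even hlen hleg

/-- The main loop: from any position satisfying the invariant, Eve wins. -/
lemma loop (hd : 0 < d) (closed : Set (BV d)) (u : BV d) (hu : isOddV u) (n : ℕ)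
    (hgood_even : ∀ w ∈ boxE d u n, w ∉ closed) (t : ℕ)
    (τ : List (BV d) → BV d) (v : BV d) :
    ∀ s m w,
      (play closed u n τ v m).head? = some w →
      w ∉ closed →
      Tw d closed u n w ≤ s →
      (∃ r, w ∈ Occ' d closed u n r) →
      (play closed u n τ v m).length % 2 = 1 →
      (play closed u n τ v m).length + 2 * Tw d closed u n w ≤ 2 * t + 1 →
      (∀ x ∈ play closed u n τ v m, x ∈ boxB d u n) →
      (∀ x ∈ play closed u n τ v m, isEvenV x →
        ∃ w', (bccGraph d).Adj x w' ∧ Tw d closed u n w < Tw d closed u n w') →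
      ∃ m', (play closed u n τ v m').length % 2 = 0 ∧
        ¬ TrapLegal (bccGraph d) {x | x ∉ closed} (play closed u n τ v m')
            (τ (play closed u n τ v m')) ∧
        (∀ x ∈ play closed u n τ v m', x ∈ boxB d u n) ∧
        (play closed u n τ v m').length ≤ 2 * t := by
  intro s
  induction s with
  | zero =>
    intro m w hh hw hTs ⟨r, hr⟩ _ _ _ _
    exact absurd hTs (by have := Tw_pos hr hw; omega)
  | succ s ih =>
    intro m w hh hw hTs ⟨r, hr⟩ hlen hbudget hbox heven
    obtain ⟨hheadI, hwmem⟩ := head?_headI hh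
    set k := Tw d closed u n w with hk
    have hk1 : 1 ≤ k := Tw_pos hr hw
    -- Eve's move
    have hne : (eveSet d closed u n w).Nonempty := by
      obtain ⟨x, hx⟩ := exists_witness hr hw
      exact ⟨x, hx⟩
    have hxprop : sigma d closed u n (play closed u n τ v m) ∈ eveSet d closed u n w := by
      have := sigma_mem (h := play closed u n τ v m) (by rw [hheadI]; exact hne)
      rwa [hheadI] at this
    set x := sigma d closed u n (play closed u n τ v m) with hxdef
    obtain ⟨hxE, hxw, hxall⟩ := hxprop
    have hxnotin : x ∉ play closed u n τ v m := by
      intro hxin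
      obtain ⟨w', hw'adj, hw'lt⟩ := heven x hxin hxE.1
      have hw'ne : w' ≠ w := by intro he; rw [he] at hw'lt; exact lt_irrefl _ hw'lt
      have := Tw_le (hxall w' hw'adj hw'ne)
      omega
    have hlegal : TrapLegal (bccGraph d) {x | x ∉ closed} (play closed u n τ v m) x :=
      ⟨w, hh, hxw.symm, hxnotin, hgood_even x hxE⟩
    have hstep1 : play closed u n τ v (m + 1) = x :: play closed u n τ v m :=
      play_succ_odd hlen hlegal
    have hlen1 : (play closed u n τ v (m + 1)).length =
        (play closed u n τ v m).length + 1 := by rw [hstep1]; rfl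
    by_cases hleg2 : TrapLegal (bccGraph d) {x | x ∉ closed} (play closed u n τ v (m + 1))
        (τ (play closed u n τ v (m + 1)))
    · -- Odin moves
      obtain ⟨c, hc, hcadj, hynotin, hyA⟩ := hleg2
      set y := τ (play closed u n τ v (m + 1)) with hydef
      have hcx : c = x := by
        rw [hstep1] at hc
        simpa using hc.symm
      rw [hcx] at hcadj
      have hyw : y ≠ w := by
        intro he
        apply hynotin
        rw [hstep1, he]
        exact List.mem_cons_of_mem _ hwmem
      have hyOcc : y ∈ Occ' d closed u n (k - 1) := hxall y hcadj hyw
      have hTy : Tw d closed u n y ≤ k - 1 := Tw_le hyOcc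
      have hstep2 : play closed u n τ v (m + 2) = y :: play closed u n τ v (m + 1) :=
        play_succ_even (by omega) ⟨c, hc, hcx ▸ hcadj, hynotin, hyA⟩
      have hyboxO : y ∈ boxO d u n := hxE.2 y hcadj
      refine ih (m + 2) y ?_ hyA ?_ ⟨k - 1, hyOcc⟩ ?_ ?_ ?_ ?_
      · rw [hstep2]; rfl
      · omega
      · rw [hstep2, hstep1]; simp only [List.length_cons]; omega
      · rw [hstep2, hstep1]; simp only [List.length_cons]; omega
      · intro z hz
        rw [hstep2, hstep1] at hz
        simp only [List.mem_cons] at hz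
        rcases hz with rfl | rfl | hz
        · exact Or.inl hyboxO
        · exact Or.inr hxE
        · exact hbox z hz
      · intro z hz hzeven
        rw [hstep2, hstep1] at hz
        simp only [List.mem_cons] at hz
        rcases hz with rfl | rfl | hz
        · exact absurd hzeven (fun h2 => not_odd_even hd (boxO_odd hu hyboxO) h2)
        · exact ⟨w, hxw, by omega⟩
        · obtain ⟨w', hw'adj, hw'lt⟩ := heven z hz hzeven
          exact ⟨w', hw'adj, by omega⟩
    · -- Odin is stuck: Eve has won
      refine ⟨m + 1, by omega, hleg2, ?_, by omega⟩
      intro z hz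
      rw [hstep1] at hz
      simp only [List.mem_cons] at hz
      rcases hz with rfl | hz
      · exact Or.inr hxE
      · exact hbox z hz

end EveAux
/-- Suppose the box `B̃(u,n)` is good: all its even vertices
are open, and its odd part is internally spanned by the Fröbose dynamics
started from the closed odd vertices inside it.  Then for every open odd
vertex `v` of the box that is occupied at time `t` of the internal dynamics,
Eve (the first player, since the game starts at an odd vertex) has a winning
strategy in Trap (moves are to open, unvisited vertices of `𝔹ᵈ`) that keeps
the token inside `B̃(u,n)` and uses at most `t` moves of Eve (the final
history, in which Odin is stuck, has length at most `2t`). -/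
theorem eve_wins_in_good_box (d : ℕ) (hd : 0 < d)
    (closed : Set (BV d)) (u : BV d) (hu : isOddV u) (n : ℕ) (hn : 0 < n)
    (hgood_even : ∀ w ∈ boxE d u n, w ∉ closed)
    (hgood_spanned : ∀ v ∈ boxO d u n,
      ∃ t : ℕ, v ∈ (frobStep d)^[t] (boxO d u n ∩ closed))
    (v : BV d) (hv : v ∈ boxO d u n) (hvopen : v ∉ closed)
    (t : ℕ) (hvt : v ∈ (frobStep d)^[t] (boxO d u n ∩ closed)) :
    ∃ σ : List (BV d) → BV d, ∀ τ : List (BV d) → BV d, ∃ m : ℕ,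
      (trapPlay (bccGraph d) {x | x ∉ closed} σ τ v m).length % 2 = 0 ∧
      ¬ TrapLegal (bccGraph d) {x | x ∉ closed}
          (trapPlay (bccGraph d) {x | x ∉ closed} σ τ v m)
          (τ (trapPlay (bccGraph d) {x | x ∉ closed} σ τ v m)) ∧
      (∀ x ∈ trapPlay (bccGraph d) {x | x ∉ closed} σ τ v m, x ∈ boxB d u n) ∧
      (trapPlay (bccGraph d) {x | x ∉ closed} σ τ v m).length ≤ 2 * t := by
  refine ⟨EveAux.sigma d closed u n, ?_⟩
  intro τ
  have hvO' : v ∈ EveAux.Occ' d closed u n t :=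
    EveAux.Occ_subset_Occ' hd closed u n t v hvt hv
  have h0 : EveAux.play closed u n τ v 0 = [v] := rfl
  obtain ⟨m, h1, h2, h3, h4⟩ := EveAux.loop hd closed u hu n hgood_even t τ v t 0 v
    (by rw [h0]; rfl) hvopen (EveAux.Tw_le hvO') ⟨t, hvO'⟩ (by rw [h0]; rfl)
    (by rw [h0]; have := EveAux.Tw_le hvO'; simp only [List.length_singleton]; omega)
    (by rw [h0]; intro x hx; simp at hx; subst hx; exact Or.inl hv)
    (by rw [h0]; intro x hx hxe; simp at hx; subst hx
        exact absurd hxe (fun h2 => EveAux.not_odd_even hd (EveAux.boxO_odd hu hv) h2))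
  exact ⟨m, h1, h2, h3, h4⟩
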